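/- For every p ∈ (1, ∞], there exist completely positive trace-preserving super-operators Φ₀, Φ₁ such that ‖Φ₀ − Φ₁‖^H_p < ‖Φ₀ − Φ₁‖_p. Concretely, with F = G = C², Φ₀ = identity, and Φ₁(X) = (tr X / 2)·I, the super-operator Φ = Φ₀ − Φ₁ satisfies ‖Φ‖^H_{1→p} = 2^{1/p}/2 < 1 = ‖Φ‖_{1→p}. -/

import Mathlib

open scoped ENNReal
open Matrix
open scoped ComplexOrder

noncomputable section

namespace SchattenNotes

/-- The vector of singular values of a matrix. -/
def singVal {m n : Type*} [Fintype m] [Fintype n] [DecidableEq n]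
    (X : Matrix m n ℂ) (i : n) : ℝ :=
  Real.sqrt (((Matrix.posSemidef_conjTranspose_mul_self X).1).eigenvalues i)

/-- The Schatten `p`-norm, for `p ∈ [1, ∞]` encoded as `p : ℝ≥0∞`. -/
def schatten {m n : Type*} [Fintype m] [Fintype n] [DecidableEq n]
    (p : ℝ≥0∞) (X : Matrix m n ℂ) : ℝ :=
  if p = ∞ then ⨆ i, singVal X i
  else (∑ i, singVal X i ^ p.toReal) ^ (1 / p.toReal)

/-- The induced `q → p` super-operator norm. -/
def opNorm {m n : Type*} [Fintype m] [Fintype n] [DecidableEq m] [DecidableEq n]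
    (q p : ℝ≥0∞) (Φ : Matrix n n ℂ →ₗ[ℂ] Matrix m m ℂ) : ℝ :=
  ⨆ X : {X : Matrix n n ℂ // X ≠ 0}, schatten p (Φ X.1) / schatten q X.1

/-- The induced `q → p` super-operator norm restricted to Hermitian inputs. -/
def opNormH {m n : Type*} [Fintype m] [Fintype n] [DecidableEq m] [DecidableEq n]
    (q p : ℝ≥0∞) (Φ : Matrix n n ℂ →ₗ[ℂ] Matrix m m ℂ) : ℝ :=
  ⨆ X : {X : Matrix n n ℂ // X.IsHermitian ∧ X ≠ 0}, schatten p (Φ X.1) / schatten q X.1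

/-- The super-operator `Φ ⊗ I_{L(H)}`, where `H` has orthonormal basis indexed by `k`. -/
def tensorId {m n : Type*} [Fintype m] [Fintype n] (k : Type*) [Fintype k]
    (Φ : Matrix n n ℂ →ₗ[ℂ] Matrix m m ℂ) :
    Matrix (n × k) (n × k) ℂ →ₗ[ℂ] Matrix (m × k) (m × k) ℂ where
  toFun X := fun r s => Φ (fun i j => X (i, r.2) (j, s.2)) r.1 s.1
  map_add' X Y := by
    funext r s
    show Φ ((fun i j => X (i, r.2) (j, s.2)) + fun i j => Y (i, r.2) (j, s.2)) r.1 s.1 = _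
    exact congrFun (congrFun (map_add Φ (fun i j => X (i, r.2) (j, s.2) : Matrix n n ℂ) (fun i j => Y (i, r.2) (j, s.2) : Matrix n n ℂ)) r.1) s.1
  map_smul' c X := by
    funext r s
    show Φ (c • fun i j => X (i, r.2) (j, s.2)) r.1 s.1 = _
    exact congrFun (congrFun (_root_.map_smul Φ c (fun i j => X (i, r.2) (j, s.2) : Matrix n n ℂ)) r.1) s.1

/-- Complete positivity of a super-operator. -/
def IsCP {m n : Type*} [Fintype m] [Fintype n]
    (Φ : Matrix n n ℂ →ₗ[ℂ] Matrix m m ℂ) : Prop :=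
  ∀ (k : ℕ) (X : Matrix (n × Fin k) (n × Fin k) ℂ),
    X.PosSemidef → (tensorId (Fin k) Φ X).PosSemidef

/-- Trace preservation of a super-operator. -/
def IsTP {m n : Type*} [Fintype m] [Fintype n]
    (Φ : Matrix n n ℂ →ₗ[ℂ] Matrix m m ℂ) : Prop :=
  ∀ X : Matrix n n ℂ, (Φ X).trace = X.trace

/-- The rank-one operator `|u⟩⟨v|`. -/
def outer {m n : Type*} (u : m → ℂ) (v : n → ℂ) : Matrix m n ℂ :=
  Matrix.vecMulVec u (star v)

/-- The quadratic form `⟨a|X|a⟩`. -/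
def sand {n : Type*} [Fintype n] (a : n → ℂ) (X : Matrix n n ℂ) : ℂ :=
  star a ⬝ᵥ X *ᵥ a

/-- A unit vector. -/
def IsUnit' {n : Type*} [Fintype n] (u : n → ℂ) : Prop := star u ⬝ᵥ u = 1


/-- Frobenius norm squared. -/
def frob (A : Matrix (Fin 2) (Fin 2) ℂ) : ℝ := ∑ i, ∑ j, Complex.normSq (A i j)

lemma trace_eq_sum_eigs {A : Matrix (Fin 2) (Fin 2) ℂ} (hA : A.IsHermitian) :
    A.trace = ∑ i, (hA.eigenvalues i : ℂ) := by
  exact hA.trace_eq_sum_eigenvalues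

abbrev eig (A : Matrix (Fin 2) (Fin 2) ℂ) (i : Fin 2) : ℝ :=
  ((Matrix.posSemidef_conjTranspose_mul_self A).1).eigenvalues i

lemma eig_nonneg (A : Matrix (Fin 2) (Fin 2) ℂ) (i : Fin 2) : 0 ≤ eig A i :=
  (Matrix.posSemidef_conjTranspose_mul_self A).eigenvalues_nonneg i

lemma eig_sum (A : Matrix (Fin 2) (Fin 2) ℂ) : eig A 0 + eig A 1 = frob A := by
  have h := trace_eq_sum_eigs (Matrix.posSemidef_conjTranspose_mul_self A).1
  have h2 : (Aᴴ * A).trace = ((frob A : ℝ) : ℂ) := by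
    simp [Matrix.trace, Matrix.mul_apply, frob, Matrix.conjTranspose_apply,
      Fin.sum_univ_two, Complex.normSq_eq_conj_mul_self]
    ring
  rw [h2, Fin.sum_univ_two] at h
  exact_mod_cast h.symm

lemma eig_prod (A : Matrix (Fin 2) (Fin 2) ℂ) :
    eig A 0 * eig A 1 = Complex.normSq A.det := by
  have h := (Matrix.posSemidef_conjTranspose_mul_self A).1.det_eq_prod_eigenvalues
  rw [Matrix.det_mul, Matrix.det_conjTranspose, Fin.prod_univ_two] at h
  have h2 : ((Complex.normSq A.det : ℝ) : ℂ) = star A.det * A.det := by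
    rw [Complex.normSq_eq_conj_mul_self]; rfl
  rw [← h2] at h
  simp only [eig]
  have := congrArg Complex.re h.symm
  simpa using this

lemma singVal_nonneg (A : Matrix (Fin 2) (Fin 2) ℂ) (i : Fin 2) : 0 ≤ singVal A i :=
  Real.sqrt_nonneg _

lemma schatten_one (A : Matrix (Fin 2) (Fin 2) ℂ) :
    schatten 1 A = Real.sqrt (frob A + 2 * ‖A.det‖) := by
  have h1 : schatten 1 A = singVal A 0 + singVal A 1 := by
    rw [schatten, if_neg (by simp), ENNReal.toReal_one]
    simp [Fin.sum_univ_two]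
  rw [h1]
  have hs : (singVal A 0 + singVal A 1) ^ 2 = frob A + 2 * ‖A.det‖ := by
    have e0 := eig_nonneg A 0
    have e1 := eig_nonneg A 1
    have : Real.sqrt (eig A 0) * Real.sqrt (eig A 1) = ‖A.det‖ := by
      rw [← Real.sqrt_mul e0, eig_prod, Complex.norm_def]
    rw [add_sq, mul_assoc]
    simp only [singVal]
    rw [Real.sq_sqrt e0, Real.sq_sqrt e1, this]
    have := eig_sum A
    change eig A 0 + eig A 1 = _ at this
    linarith
  rw [← hs, Real.sqrt_sq (add_nonneg (singVal_nonneg A 0) (singVal_nonneg A 1))]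


lemma frob_nonneg (A : Matrix (Fin 2) (Fin 2) ℂ) : 0 ≤ frob A := by
  apply Finset.sum_nonneg; intros; apply Finset.sum_nonneg; intros; exact Complex.normSq_nonneg _

lemma frob_pos {A : Matrix (Fin 2) (Fin 2) ℂ} (hA : A ≠ 0) : 0 < frob A := by
  obtain ⟨i, j, hij⟩ : ∃ i j, A i j ≠ 0 := by
    by_contra h
    push_neg at h
    exact hA (by ext i j; simpa using h i j)
  have h1 : 0 < Complex.normSq (A i j) := Complex.normSq_pos.mpr hij
  calc (0:ℝ) < Complex.normSq (A i j) := h1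
    _ ≤ ∑ j, Complex.normSq (A i j) :=
        Finset.single_le_sum (f := fun j => Complex.normSq (A i j))
          (fun _ _ => Complex.normSq_nonneg _) (Finset.mem_univ j)
    _ ≤ frob A := Finset.single_le_sum (f := fun i => ∑ j, Complex.normSq (A i j))
          (fun _ _ => Finset.sum_nonneg fun _ _ => Complex.normSq_nonneg _) (Finset.mem_univ i)

lemma schatten_one_pos {A : Matrix (Fin 2) (Fin 2) ℂ} (hA : A ≠ 0) : 0 < schatten 1 A := by
  rw [schatten_one]
  apply Real.sqrt_pos.mpr
  have := frob_pos hA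
  have : (0:ℝ) ≤ ‖A.det‖ := norm_nonneg _
  linarith [frob_pos hA]

lemma schatten_one_nonneg (A : Matrix (Fin 2) (Fin 2) ℂ) : 0 ≤ schatten 1 A := by
  rw [schatten_one]; exact Real.sqrt_nonneg _

lemma singVal_le_schatten {p : ℝ≥0∞} (hp : 1 ≤ p) (A : Matrix (Fin 2) (Fin 2) ℂ) (i : Fin 2) :
    singVal A i ≤ schatten p A := by
  rcases eq_or_ne p ∞ with rfl | hfin
  · rw [schatten, if_pos rfl]
    exact le_ciSup (Set.Finite.bddAbove (Set.finite_range _)) i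
  · rw [schatten, if_neg hfin]
    have hpt : 0 < p.toReal := ENNReal.toReal_pos (by intro h; rw [h] at hp; simp at hp) hfin
    have h1 : (singVal A i ^ p.toReal) ^ (1 / p.toReal) = singVal A i := by
      rw [← Real.rpow_mul (singVal_nonneg A i), mul_one_div, div_self (ne_of_gt hpt),
        Real.rpow_one]
    rw [← h1]
    apply Real.rpow_le_rpow (Real.rpow_nonneg (singVal_nonneg A i) _)
    · exact Finset.single_le_sum (f := fun i => singVal A i ^ p.toReal)
        (fun j _ => Real.rpow_nonneg (singVal_nonneg A j) _) (Finset.mem_univ i)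
    · positivity

lemma schatten_le_schatten_one {p : ℝ≥0∞} (hp : 1 ≤ p) (A : Matrix (Fin 2) (Fin 2) ℂ) :
    schatten p A ≤ schatten 1 A := by
  have h1 : schatten 1 A = singVal A 0 + singVal A 1 := by
    rw [schatten, if_neg (by simp), ENNReal.toReal_one]
    simp [Fin.sum_univ_two]
  rcases eq_or_ne p ∞ with rfl | hfin
  · rw [schatten, if_pos rfl, h1]
    apply ciSup_le
    intro i
    fin_cases i
    · exact le_add_of_nonneg_right (singVal_nonneg A 1)
    · exact le_add_of_nonneg_left (singVal_nonneg A 0)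
  · rw [schatten, if_neg hfin, h1, Fin.sum_univ_two]
    have hpt : 1 ≤ p.toReal := by
      have := ENNReal.toReal_mono hfin hp
      simpa using this
    have ha : ((singVal A 0).toNNReal : ℝ) = singVal A 0 := Real.coe_toNNReal _ (singVal_nonneg A 0)
    have hb : ((singVal A 1).toNNReal : ℝ) = singVal A 1 := Real.coe_toNNReal _ (singVal_nonneg A 1)
    have key := NNReal.rpow_add_rpow_le_add (singVal A 0).toNNReal (singVal A 1).toNNReal hpt
    have key' : ((((singVal A 0).toNNReal ^ p.toReal + (singVal A 1).toNNReal ^ p.toReal)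
        ^ (1 / p.toReal) : NNReal) : ℝ) ≤ (((singVal A 0).toNNReal + (singVal A 1).toNNReal : NNReal) : ℝ) := by
      exact_mod_cast key
    rw [NNReal.coe_rpow, NNReal.coe_add, NNReal.coe_rpow, NNReal.coe_rpow, NNReal.coe_add,
      ha, hb] at key'
    exact key'

lemma schatten_of_const {p : ℝ≥0∞} (hp : 1 ≤ p) {A : Matrix (Fin 2) (Fin 2) ℂ} {c : ℝ}
    (hc : 0 ≤ c) (h : ∀ i, singVal A i = c) :
    schatten p A = (2 : ℝ) ^ (1 / p.toReal) * c := by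
  rcases eq_or_ne p ∞ with rfl | hfin
  · rw [schatten, if_pos rfl]
    simp [h, ciSup_const]
  · rw [schatten, if_neg hfin]
    have hpt : 0 < p.toReal := ENNReal.toReal_pos (by intro h'; rw [h'] at hp; simp at hp) hfin
    rw [Fin.sum_univ_two, h 0, h 1, ← two_mul]
    rw [Real.mul_rpow (by norm_num) (Real.rpow_nonneg hc _)]
    congr 1
    rw [← Real.rpow_mul hc, mul_one_div, div_self (ne_of_gt hpt), Real.rpow_one]

lemma singVal_const {A : Matrix (Fin 2) (Fin 2) ℂ}
    (h : frob A ^ 2 = 4 * Complex.normSq A.det) (i : Fin 2) :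
    singVal A i = Real.sqrt (frob A / 2) := by
  have hs := eig_sum A
  have hpr := eig_prod A
  have h0 := eig_nonneg A 0
  have h1 := eig_nonneg A 1
  have heq : eig A 0 = eig A 1 := by nlinarith [sq_nonneg (eig A 0 - eig A 1)]
  have hval : ∀ j : Fin 2, eig A j = frob A / 2 := by
    intro j
    fin_cases j
    · show eig A 0 = frob A / 2; linarith
    · show eig A 1 = frob A / 2; linarith
  rw [singVal]
  rw [show ((Matrix.posSemidef_conjTranspose_mul_self A).1).eigenvalues i = frob A / 2 from hval i]

/-- The difference map applied: `B X = X - (tr X / 2) • 1`. -/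
def Bm (X : Matrix (Fin 2) (Fin 2) ℂ) : Matrix (Fin 2) (Fin 2) ℂ :=
  X - (X.trace / 2) • (1 : Matrix (Fin 2) (Fin 2) ℂ)

lemma normSq_div_two (z : ℂ) : Complex.normSq (z / 2) = Complex.normSq z / 4 := by
  rw [map_div₀]
  norm_num [Complex.normSq_apply]

lemma Bm_00 (X : Matrix (Fin 2) (Fin 2) ℂ) : Bm X 0 0 = (X 0 0 - X 1 1) / 2 := by
  simp [Bm, Matrix.trace_fin_two, Matrix.sub_apply, Matrix.smul_apply, Matrix.one_apply]
  ring

lemma Bm_11 (X : Matrix (Fin 2) (Fin 2) ℂ) : Bm X 1 1 = (X 1 1 - X 0 0) / 2 := by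
  simp [Bm, Matrix.trace_fin_two, Matrix.sub_apply, Matrix.smul_apply, Matrix.one_apply]
  ring

lemma Bm_01 (X : Matrix (Fin 2) (Fin 2) ℂ) : Bm X 0 1 = X 0 1 := by
  simp [Bm, Matrix.sub_apply, Matrix.smul_apply, Matrix.one_apply]

lemma Bm_10 (X : Matrix (Fin 2) (Fin 2) ℂ) : Bm X 1 0 = X 1 0 := by
  simp [Bm, Matrix.sub_apply, Matrix.smul_apply, Matrix.one_apply]

lemma frob_Bm (X : Matrix (Fin 2) (Fin 2) ℂ) :
    frob (Bm X) = Complex.normSq (X 0 0 - X 1 1) / 2 + Complex.normSq (X 0 1)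
      + Complex.normSq (X 1 0) := by
  simp only [frob, Fin.sum_univ_two, Bm_00, Bm_01, Bm_10, Bm_11, normSq_div_two]
  have : Complex.normSq (X 1 1 - X 0 0) = Complex.normSq (X 0 0 - X 1 1) := by
    rw [← Complex.normSq_neg]; ring_nf
  rw [this]; ring

lemma det_Bm (X : Matrix (Fin 2) (Fin 2) ℂ) :
    (Bm X).det = X.det - (X.trace / 2) ^ 2 := by
  rw [Matrix.det_fin_two, Matrix.det_fin_two, Bm_00, Bm_01, Bm_10, Bm_11,
    Matrix.trace_fin_two]
  ring

lemma parallelogram (a d : ℂ) :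
    Complex.normSq (a - d) + Complex.normSq (a + d) = 2 * (Complex.normSq a + Complex.normSq d) := by
  simp [Complex.normSq_apply]; ring

lemma key1 (X : Matrix (Fin 2) (Fin 2) ℂ) :
    frob (Bm X) + 2 * ‖(Bm X).det‖ ≤ frob X + 2 * ‖X.det‖ := by
  have habs : ‖(Bm X).det‖ ≤ ‖X.det‖ + Complex.normSq X.trace / 4 := by
    rw [det_Bm]
    calc ‖X.det - (X.trace / 2) ^ 2‖
        ≤ ‖X.det‖ + ‖(X.trace / 2) ^ 2‖ := by
          rw [sub_eq_add_neg]
          refine le_trans (norm_add_le _ _) ?_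
          rw [norm_neg]
      _ = ‖X.det‖ + Complex.normSq X.trace / 4 := by
          rw [norm_pow, norm_div, Complex.norm_two, ← Complex.sq_norm]
          ring
  have hfr : frob (Bm X) + Complex.normSq X.trace / 2 ≤ frob X := by
    rw [frob_Bm]
    have hpar := parallelogram (X 0 0) (X 1 1)
    have htr : Complex.normSq X.trace = Complex.normSq (X 0 0 + X 1 1) := by
      rw [Matrix.trace_fin_two]
    rw [htr]
    simp only [frob, Fin.sum_univ_two]
    nlinarith [Complex.normSq_nonneg (X 0 1), Complex.normSq_nonneg (X 1 0)]
  linarith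

section Hermitian

variable {X : Matrix (Fin 2) (Fin 2) ℂ} (hX : X.IsHermitian)

lemma herm00 (hX : X.IsHermitian) : X 0 0 = ((X 0 0).re : ℂ) := by
  have h : (starRingEnd ℂ) (X 0 0) = X 0 0 := hX.apply 0 0
  exact (Complex.conj_eq_iff_re.mp h).symm

lemma herm11 (hX : X.IsHermitian) : X 1 1 = ((X 1 1).re : ℂ) := by
  have h : (starRingEnd ℂ) (X 1 1) = X 1 1 := hX.apply 1 1
  exact (Complex.conj_eq_iff_re.mp h).symm

lemma herm10 (hX : X.IsHermitian) : X 1 0 = (starRingEnd ℂ) (X 0 1) := by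
  have h : (starRingEnd ℂ) (X 0 1) = X 1 0 := hX.apply 1 0
  exact h.symm

lemma det_herm (hX : X.IsHermitian) :
    X.det = (((X 0 0).re * (X 1 1).re - Complex.normSq (X 0 1) : ℝ) : ℂ) := by
  rw [Matrix.det_fin_two, herm10 hX]
  nth_rewrite 1 [herm00 hX, herm11 hX]
  rw [Complex.mul_conj]
  push_cast
  ring


lemma im00 (hX : X.IsHermitian) : (X 0 0).im = 0 := by
  have := congrArg Complex.im (herm00 hX); simpa using this

lemma im11 (hX : X.IsHermitian) : (X 1 1).im = 0 := by
  have := congrArg Complex.im (herm11 hX); simpa using this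

lemma normSq00 (hX : X.IsHermitian) : Complex.normSq (X 0 0) = (X 0 0).re ^ 2 := by
  rw [Complex.normSq_apply, im00 hX]; ring

lemma normSq11 (hX : X.IsHermitian) : Complex.normSq (X 1 1) = (X 1 1).re ^ 2 := by
  rw [Complex.normSq_apply, im11 hX]; ring

lemma trace_herm (hX : X.IsHermitian) :
    X.trace = (((X 0 0).re + (X 1 1).re : ℝ) : ℂ) := by
  rw [Matrix.trace_fin_two]
  nth_rewrite 1 [herm00 hX]
  nth_rewrite 1 [herm11 hX]
  push_cast; ring

lemma det_Bm_herm (hX : X.IsHermitian) :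
    (Bm X).det = ((-(((X 0 0).re - (X 1 1).re) ^ 2 / 4 + Complex.normSq (X 0 1)) : ℝ) : ℂ) := by
  rw [det_Bm, det_herm hX, trace_herm hX]
  push_cast
  ring

lemma frob_Bm_herm (hX : X.IsHermitian) :
    frob (Bm X) = 2 * (((X 0 0).re - (X 1 1).re) ^ 2 / 4 + Complex.normSq (X 0 1)) := by
  rw [frob_Bm, herm10 hX, Complex.normSq_conj]
  have : X 0 0 - X 1 1 = ((((X 0 0).re - (X 1 1).re : ℝ)) : ℂ) := by
    nth_rewrite 1 [herm00 hX, herm11 hX]; push_cast; ring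
  rw [this, Complex.normSq_ofReal]
  ring

lemma keyH1 (hX : X.IsHermitian) :
    frob (Bm X) ^ 2 = 4 * Complex.normSq (Bm X).det := by
  rw [frob_Bm_herm hX, det_Bm_herm hX, Complex.normSq_ofReal]
  have := Complex.normSq_nonneg (X 0 1)
  nlinarith [sq_nonneg ((X 0 0).re - (X 1 1).re)]

lemma keyH2 (hX : X.IsHermitian) :
    2 * frob (Bm X) ≤ frob X + 2 * ‖X.det‖ := by
  have hdet : ‖X.det‖ = |(X 0 0).re * (X 1 1).re - Complex.normSq (X 0 1)| := by
    rw [det_herm hX, Complex.norm_real, Real.norm_eq_abs]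
  have hfX : frob X = (X 0 0).re ^ 2 + (X 1 1).re ^ 2 + 2 * Complex.normSq (X 0 1) := by
    simp only [frob, Fin.sum_univ_two]
    rw [herm10 hX, Complex.normSq_conj, normSq00 hX, normSq11 hX]
    ring
  rw [frob_Bm_herm hX, hdet, hfX]
  have h1 := neg_abs_le ((X 0 0).re * (X 1 1).re - Complex.normSq (X 0 1))
  nlinarith [sq_nonneg ((X 0 0).re + (X 1 1).re)]

lemma sqrt_four : Real.sqrt 4 = 2 := by
  rw [show (4:ℝ) = 2 ^ 2 by norm_num, Real.sqrt_sq (by norm_num)]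

/-- The Hermitian bound: `‖Φ X‖_p ≤ (2^{1/p}/2) ‖X‖₁`. -/
lemma herm_bound {p : ℝ≥0∞} (hp : 1 ≤ p) (hX : X.IsHermitian) :
    schatten p (Bm X) ≤ ((2:ℝ) ^ (1 / p.toReal) / 2) * schatten 1 X := by
  have hsv := singVal_const (A := Bm X) (keyH1 hX)
  rw [schatten_of_const hp (Real.sqrt_nonneg _) hsv, schatten_one]
  have hkey : Real.sqrt (frob (Bm X) / 2)
      ≤ Real.sqrt (frob X + 2 * ‖X.det‖) / 2 := by
    have h2 := keyH2 hX
    have : frob (Bm X) / 2 ≤ (frob X + 2 * ‖X.det‖) / 4 := by linarith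
    calc Real.sqrt (frob (Bm X) / 2)
        ≤ Real.sqrt ((frob X + 2 * ‖X.det‖) / 4) := Real.sqrt_le_sqrt this
      _ = Real.sqrt (frob X + 2 * ‖X.det‖) / 2 := by
          have hnn : (0:ℝ) ≤ frob X + 2 * ‖X.det‖ := by
            have := frob_nonneg X
            have := norm_nonneg X.det
            linarith
          rw [Real.sqrt_div hnn, sqrt_four]
  calc (2:ℝ) ^ (1 / p.toReal) * Real.sqrt (frob (Bm X) / 2)
      ≤ (2:ℝ) ^ (1 / p.toReal) * (Real.sqrt (frob X + 2 * ‖X.det‖) / 2) :=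
        mul_le_mul_of_nonneg_left hkey (Real.rpow_nonneg (by norm_num) _)
    _ = (2:ℝ) ^ (1 / p.toReal) / 2 * Real.sqrt (frob X + 2 * ‖X.det‖) := by ring

end Hermitian

/-- The general bound: `‖Φ X‖_p ≤ ‖X‖₁`. -/
lemma gen_bound {p : ℝ≥0∞} (hp : 1 ≤ p) (X : Matrix (Fin 2) (Fin 2) ℂ) :
    schatten p (Bm X) ≤ schatten 1 X := by
  refine le_trans (schatten_le_schatten_one hp _) ?_
  rw [schatten_one, schatten_one]
  exact Real.sqrt_le_sqrt (key1 X)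


def W0 : Matrix (Fin 2) (Fin 2) ℂ := !![1, 0; 0, -1]
def W1 : Matrix (Fin 2) (Fin 2) ℂ := !![0, 1; 0, 0]

lemma W0_herm : W0.IsHermitian := by
  ext i j
  fin_cases i <;> fin_cases j <;>
    simp [W0, Matrix.conjTranspose_apply]

lemma W0_ne : W0 ≠ 0 := by
  intro h
  have := congrFun (congrFun h 0) 0
  simp [W0] at this

lemma W1_ne : W1 ≠ 0 := by
  intro h
  have := congrFun (congrFun h 0) 1
  simp [W1] at this

lemma Bm_W0 : Bm W0 = W0 := by
  have ht : W0.trace = 0 := by simp [W0, Matrix.trace_fin_two]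
  simp [Bm, ht]

lemma Bm_W1 : Bm W1 = W1 := by
  have ht : W1.trace = 0 := by simp [W1, Matrix.trace_fin_two]
  simp [Bm, ht]

lemma frob_W0 : frob W0 = 2 := by
  simp [frob, Fin.sum_univ_two, W0]
  norm_num

lemma det_W0 : W0.det = -1 := by
  simp [W0, Matrix.det_fin_two]

lemma frob_W1 : frob W1 = 1 := by
  simp [frob, Fin.sum_univ_two, W1]

lemma det_W1 : W1.det = 0 := by
  simp [W1, Matrix.det_fin_two]

lemma schatten_one_W0 : schatten 1 W0 = 2 := by
  rw [schatten_one, frob_W0, det_W0]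
  norm_num [sqrt_four]

lemma schatten_one_W1 : schatten 1 W1 = 1 := by
  rw [schatten_one, frob_W1, det_W1]
  simp

lemma schatten_W0 {p : ℝ≥0∞} (hp : 1 ≤ p) :
    schatten p (Bm W0) = (2:ℝ) ^ (1 / p.toReal) := by
  rw [Bm_W0]
  have hc : frob W0 ^ 2 = 4 * Complex.normSq W0.det := by
    rw [frob_W0, det_W0]; norm_num
  have hsv := singVal_const hc
  rw [frob_W0] at hsv
  norm_num at hsv
  rw [schatten_of_const hp (by norm_num : (0:ℝ) ≤ 1) (Fin.forall_fin_two.mpr hsv), mul_one]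

lemma schatten_W1 {p : ℝ≥0∞} (hp : 1 ≤ p) : schatten p (Bm W1) = 1 := by
  rw [Bm_W1]
  have hub : schatten p W1 ≤ 1 := by
    refine le_trans (schatten_le_schatten_one hp _) ?_
    rw [schatten_one_W1]
  have hsum := eig_sum W1
  have hprod := eig_prod W1
  rw [frob_W1] at hsum
  rw [det_W1] at hprod
  simp only [map_zero] at hprod
  have hlb : ∃ i, singVal W1 i = 1 := by
    rcases mul_eq_zero.mp hprod with h | h
    · refine ⟨1, ?_⟩
      rw [singVal, show ((Matrix.posSemidef_conjTranspose_mul_self W1).1).eigenvalues 1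
        = (1:ℝ) by change eig W1 1 = 1; linarith]
      exact Real.sqrt_one
    · refine ⟨0, ?_⟩
      rw [singVal, show ((Matrix.posSemidef_conjTranspose_mul_self W1).1).eigenvalues 0
        = (1:ℝ) by change eig W1 0 = 1; linarith]
      exact Real.sqrt_one
  obtain ⟨i, hi⟩ := hlb
  have := singVal_le_schatten hp W1 i
  rw [hi] at this
  linarith


/-- The completely depolarizing channel. -/
def depol : Matrix (Fin 2) (Fin 2) ℂ →ₗ[ℂ] Matrix (Fin 2) (Fin 2) ℂ where
  toFun X := (X.trace / 2) • (1 : Matrix (Fin 2) (Fin 2) ℂ)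
  map_add' X Y := by
    show (((X + Y).trace / 2) • (1 : Matrix (Fin 2) (Fin 2) ℂ)) = _
    rw [Matrix.trace_add, add_div, add_smul]
  map_smul' c X := by
    show (((c • X).trace / 2) • (1 : Matrix (Fin 2) (Fin 2) ℂ)) = _
    rw [Matrix.trace_smul, RingHom.id_apply, smul_eq_mul, mul_div_assoc, mul_smul]

lemma depol_CP : ∀ (k : ℕ) (X : Matrix (Fin 2 × Fin k) (Fin 2 × Fin k) ℂ),
    X.PosSemidef → (tensorId (Fin k) depol X).PosSemidef := by
  intro k X hX
  have hM : ∀ r s : Fin 2 × Fin k, tensorId (Fin k) depol X r s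
      = ((∑ i, X (i, r.2) (i, s.2)) / 2) * (if r.1 = s.1 then 1 else 0) := by
    intro r s
    show ((Matrix.trace (Matrix.of fun i j => X (i, r.2) (j, s.2)) / 2)
      • (1 : Matrix (Fin 2) (Fin 2) ℂ)) r.1 s.1 = _
    rw [Matrix.smul_apply, Matrix.one_apply, smul_eq_mul]
    congr 1
  refine Matrix.PosSemidef.of_dotProduct_mulVec_nonneg ?_ ?_
  · ext r s
    rw [Matrix.conjTranspose_apply, hM, hM]
    rcases eq_or_ne r.1 s.1 with h | h
    · rw [if_pos h, if_pos h.symm, mul_one, mul_one, star_div₀]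
      congr 1
      · rw [star_sum]
        exact Finset.sum_congr rfl fun i _ => hX.1.apply _ _
      · simp
    · rw [if_neg h, if_neg (fun hh => h hh.symm), mul_zero, mul_zero, star_zero]
  · intro v
    have key : star v ⬝ᵥ (tensorId (Fin k) depol X) *ᵥ v
        = (1/2 : ℂ) * ∑ a : Fin 2, ∑ i : Fin 2,
          ∑ r2, ∑ s2, star (v (a, r2)) * (X (i, r2) (i, s2) * v (a, s2)) := by
      simp only [dotProduct, Matrix.mulVec, hM, Fintype.sum_prod_type, Pi.star_apply,
        mul_ite, mul_one, mul_zero, ite_mul, zero_mul, Finset.mul_sum]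
      apply Finset.sum_congr rfl; intro a _
      conv_rhs => rw [Finset.sum_comm]
      apply Finset.sum_congr rfl; intro r2 _
      rw [Finset.sum_comm]
      simp only [Finset.sum_ite_eq, Finset.mem_univ, if_true]
      conv_rhs => rw [Finset.sum_comm]
      apply Finset.sum_congr rfl; intro s2 _
      rw [Finset.sum_div, Finset.sum_mul, Finset.mul_sum]
      apply Finset.sum_congr rfl; intro i _
      ring
    rw [key]
    apply mul_nonneg
    · rw [show (1/2 : ℂ) = ((1/2 : ℝ) : ℂ) by norm_num, Complex.zero_le_real]
      norm_num
    · apply Finset.sum_nonneg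
      intro a _
      apply Finset.sum_nonneg
      intro i _
      have hq := hX.dotProduct_mulVec_nonneg (fun q : Fin 2 × Fin k => if q.1 = i then v (a, q.2) else 0)
      have expand : star (fun q : Fin 2 × Fin k => if q.1 = i then v (a, q.2) else 0) ⬝ᵥ
          X *ᵥ (fun q : Fin 2 × Fin k => if q.1 = i then v (a, q.2) else 0)
          = ∑ r2, ∑ s2, star (v (a, r2)) * (X (i, r2) (i, s2) * v (a, s2)) := by
        simp [dotProduct, Matrix.mulVec, Fintype.sum_prod_type, apply_ite, ite_mul,
          mul_ite, mul_zero, zero_mul, Finset.mul_sum]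
      rw [expand] at hq
      exact hq

lemma depol_TP : ∀ X : Matrix (Fin 2) (Fin 2) ℂ, (depol X).trace = X.trace := by
  intro X
  show ((X.trace / 2) • (1 : Matrix (Fin 2) (Fin 2) ℂ)).trace = X.trace
  rw [Matrix.trace_smul, Matrix.trace_one]
  simp [smul_eq_mul]

/-- For every `p ∈ (1, ∞]` there are CPTP maps `Φ₀` (identity) and `Φ₁` (completely
depolarizing) with `‖Φ₀ − Φ₁‖^H_{1→p} = 2^{1/p}/2 < 1 = ‖Φ₀ − Φ₁‖_{1→p}`. -/
theorem stmt6 (p : ℝ≥0∞) (hp : 1 < p) :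
    ∃ Φ₀ Φ₁ : Matrix (Fin 2) (Fin 2) ℂ →ₗ[ℂ] Matrix (Fin 2) (Fin 2) ℂ,
      IsCP Φ₀ ∧ IsTP Φ₀ ∧ IsCP Φ₁ ∧ IsTP Φ₁ ∧
      (∀ X, Φ₀ X = X) ∧
      (∀ X, Φ₁ X = (X.trace / 2) • (1 : Matrix (Fin 2) (Fin 2) ℂ)) ∧
      opNormH 1 p (Φ₀ - Φ₁) = (2 : ℝ) ^ (1 / p.toReal) / 2 ∧
      opNorm 1 p (Φ₀ - Φ₁) = 1 ∧
      opNormH 1 p (Φ₀ - Φ₁) < opNorm 1 p (Φ₀ - Φ₁) := by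
  have hp1 : (1 : ℝ≥0∞) ≤ p := hp.le
  set c : ℝ := (2 : ℝ) ^ (1 / p.toReal) / 2 with hc
  have hc1 : c < 1 := by
    rcases eq_or_ne p ⊤ with rfl | hfin
    · rw [hc]
      norm_num
    · have h1 : (1 : ℝ) < p.toReal := by
        have := ENNReal.toReal_strict_mono hfin hp
        simpa using this
      have h2 : 1 / p.toReal < 1 := by
        rw [div_lt_one (by linarith)]
        exact h1
      have h3 : (2:ℝ) ^ (1 / p.toReal) < 2 ^ (1:ℝ) :=
        Real.rpow_lt_rpow_of_exponent_lt (by norm_num) h2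
      rw [Real.rpow_one] at h3
      rw [hc]
      linarith
  set Φd : Matrix (Fin 2) (Fin 2) ℂ →ₗ[ℂ] Matrix (Fin 2) (Fin 2) ℂ := LinearMap.id - depol
    with hΦd
  have hsub : ∀ X : Matrix (Fin 2) (Fin 2) ℂ, Φd X = Bm X := by
    intro X
    rw [hΦd, LinearMap.sub_apply]
    rfl
  -- opNormH
  have hNH : opNormH 1 p Φd = c := by
    unfold opNormH
    simp only [hsub]
    have hbound : ∀ X : {X : Matrix (Fin 2) (Fin 2) ℂ // X.IsHermitian ∧ X ≠ 0},
        schatten p (Bm X.1) / schatten 1 X.1 ≤ c := by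
      rintro ⟨X, hH, hne⟩
      rw [div_le_iff₀ (schatten_one_pos hne)]
      exact herm_bound hp1 hH
    have hw : (⟨W0, W0_herm, W0_ne⟩ : {X : Matrix (Fin 2) (Fin 2) ℂ // X.IsHermitian ∧ X ≠ 0})
      ∈ Set.univ := trivial
    haveI : Nonempty {X : Matrix (Fin 2) (Fin 2) ℂ // X.IsHermitian ∧ X ≠ 0} :=
      ⟨⟨W0, W0_herm, W0_ne⟩⟩
    apply le_antisymm
    · exact ciSup_le hbound
    · have hbdd : BddAbove (Set.range (fun X : {X : Matrix (Fin 2) (Fin 2) ℂ //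
          X.IsHermitian ∧ X ≠ 0} => schatten p (Bm X.1) / schatten 1 X.1)) := by
        refine ⟨c, ?_⟩
        rintro y ⟨X, rfl⟩
        exact hbound X
      have := le_ciSup hbdd (⟨W0, W0_herm, W0_ne⟩ :
        {X : Matrix (Fin 2) (Fin 2) ℂ // X.IsHermitian ∧ X ≠ 0})
      have hval : schatten p (Bm W0) / schatten 1 W0 = c := by
        rw [schatten_W0 hp1, schatten_one_W0, hc]
      rwa [hval] at this
  -- opNorm
  have hN : opNorm 1 p Φd = 1 := by
    unfold opNorm
    simp only [hsub]
    have hbound : ∀ X : {X : Matrix (Fin 2) (Fin 2) ℂ // X ≠ 0},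
        schatten p (Bm X.1) / schatten 1 X.1 ≤ 1 := by
      rintro ⟨X, hne⟩
      rw [div_le_one (schatten_one_pos hne)]
      exact gen_bound hp1 X
    haveI : Nonempty {X : Matrix (Fin 2) (Fin 2) ℂ // X ≠ 0} := ⟨⟨W1, W1_ne⟩⟩
    apply le_antisymm
    · exact ciSup_le hbound
    · have hbdd : BddAbove (Set.range (fun X : {X : Matrix (Fin 2) (Fin 2) ℂ //
          X ≠ 0} => schatten p (Bm X.1) / schatten 1 X.1)) := by
        refine ⟨1, ?_⟩
        rintro y ⟨X, rfl⟩
        exact hbound X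
      have := le_ciSup hbdd (⟨W1, W1_ne⟩ : {X : Matrix (Fin 2) (Fin 2) ℂ // X ≠ 0})
      have hval : schatten p (Bm W1) / schatten 1 W1 = 1 := by
        rw [schatten_W1 hp1, schatten_one_W1]
        norm_num
      rwa [hval] at this
  refine ⟨LinearMap.id, depol, ?_, ?_, depol_CP, depol_TP, fun X => rfl, fun X => rfl,
    hNH, hN, ?_⟩
  · intro k X hX
    have h : tensorId (Fin k) (LinearMap.id (R := ℂ) (M := Matrix (Fin 2) (Fin 2) ℂ)) X = X := rfl
    rwa [h]
  · intro X; rfl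
  · rw [hNH, hN]; exact hc1

end SchattenNotes
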